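/- Let u be a real number with 0 < u < arccosh(3/2). Then φ(u) is purely imaginary (Re φ(u) = 0) with −π/3 < Im φ(u) < 0, and moreover e^{u} + e^{−u} − e^{φ(u)} − e^{−φ(u)} = 1. -/

import Mathlib

open Complex

/-- Inverse hyperbolic cosine. -/
noncomputable def arccosh (x : ℝ) : ℝ := Real.log (x + Real.sqrt (x ^ 2 - 1))

/-- φ(u). -/
noncomputable def phiu (u : ℝ) : ℂ :=
  Complex.log ((Real.cosh u : ℂ) - 1/2 -
    (Complex.I / 2) * (Real.sqrt ((2 * Real.cosh u + 1) * (3 - 2 * Real.cosh u)) : ℂ))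

/-- Lemma: `φ(u)` is purely imaginary with `−π/3 < Im φ(u) < 0`, and
`e^u + e^{−u} − e^{φ(u)} − e^{−φ(u)} = 1`. -/
theorem phiu_properties (u : ℝ) (hu0 : 0 < u) (hu1 : u < arccosh (3/2)) :
    (phiu u).re = 0 ∧ -Real.pi / 3 < (phiu u).im ∧ (phiu u).im < 0 ∧
      Complex.exp (u : ℂ) + Complex.exp (-(u : ℂ)) -
        Complex.exp (phiu u) - Complex.exp (-(phiu u)) = 1 := by
  set c := Real.cosh u with hc
  have hc1 : 1 < c := Real.one_lt_cosh.mpr (ne_of_gt hu0)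
  have hsq : Real.sqrt ((3/2:ℝ)^2 - 1) = Real.sqrt (5/4) := by norm_num
  have hx : (0:ℝ) < 3/2 + Real.sqrt ((3/2:ℝ)^2 - 1) := by positivity
  have hcosh_ac : Real.cosh (arccosh (3/2)) = 3/2 := by
    rw [arccosh, Real.cosh_log hx]
    have h5 : Real.sqrt ((3/2:ℝ)^2 - 1) ^ 2 = 5/4 := by
      rw [Real.sq_sqrt] <;> norm_num
    have hinv : (3/2 + Real.sqrt ((3/2:ℝ)^2 - 1))⁻¹ = 3/2 - Real.sqrt ((3/2:ℝ)^2 - 1) :=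
      inv_eq_of_mul_eq_one_right (by nlinarith [h5])
    rw [hinv]; ring
  have hc2 : c < 3/2 := by
    have := Real.cosh_lt_cosh.mpr (show |u| < |arccosh (3/2)| by
      rw [abs_of_pos hu0, abs_of_pos (lt_trans hu0 hu1)]; exact hu1)
    rwa [hcosh_ac] at this
  set s := Real.sqrt ((2 * c + 1) * (3 - 2 * c)) with hs
  have hspos : 0 < s := Real.sqrt_pos.mpr (by nlinarith)
  have hs2 : s ^ 2 = (2 * c + 1) * (3 - 2 * c) := Real.sq_sqrt (by nlinarith)
  set z : ℂ := (c : ℂ) - 1/2 - (Complex.I / 2) * (s : ℂ) with hz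
  have hzre : z.re = c - 1/2 := by simp [hz]
  have hzim : z.im = -(s/2) := by simp [hz]; ring
  have hnorm : Complex.normSq z = 1 := by
    rw [Complex.normSq_apply, hzre, hzim]; nlinarith
  have habs : ‖z‖ = 1 := by
    rw [Complex.norm_def, hnorm, Real.sqrt_one]
  have hzne : z ≠ 0 := by
    intro h; rw [h] at habs; simp at habs
  have hre : (phiu u).re = 0 := by
    rw [phiu, Complex.log_re]; rw [← hc, ← hs, ← hz, habs, Real.log_one]
  have him : (phiu u).im = Complex.arg z := by
    rw [phiu, Complex.log_im, ← hc, ← hs, ← hz]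
  have hargneg : Complex.arg z < 0 := by
    rw [Complex.arg_neg_iff, hzim]
    linarith
  have hcosarg : Real.cos (Complex.arg z) = c - 1/2 := by
    rw [Complex.cos_arg hzne, habs, hzre]; ring
  have harglb : -Real.pi / 3 < Complex.arg z := by
    by_contra h
    push_neg at h
    have h1 : Real.pi / 3 ≤ -Complex.arg z := by linarith
    have h2 : -Complex.arg z ≤ Real.pi := le_of_lt (by linarith [Complex.neg_pi_lt_arg z])
    have h3 : Real.cos (-Complex.arg z) ≤ Real.cos (Real.pi / 3) :=
      Real.cos_le_cos_of_nonneg_of_le_pi (by positivity) h2 h1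
    rw [Real.cos_neg, hcosarg, Real.cos_pi_div_three] at h3
    linarith
  have hexp : Complex.exp (phiu u) = z := by
    rw [phiu, ← hc, ← hs, ← hz]; exact Complex.exp_log hzne
  have hexpneg : Complex.exp (-(phiu u)) = (starRingEnd ℂ) z := by
    rw [Complex.exp_neg, hexp, Complex.inv_def, hnorm]
    simp
  have hsum : Complex.exp (u : ℂ) + Complex.exp (-(u : ℂ)) = 2 * (c : ℂ) := by
    rw [← Complex.ofReal_neg, ← Complex.ofReal_exp, ← Complex.ofReal_exp]
    norm_cast
    rw [hc, Real.cosh_eq]; ring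
  refine ⟨hre, ?_, ?_, ?_⟩
  · rw [him]; exact harglb
  · rw [him]; exact hargneg
  · rw [hexp, hexpneg, hsum]
    have := Complex.add_conj z
    rw [hzre] at this
    have hzc : z + (starRingEnd ℂ) z = 2 * (c : ℂ) - 1 := by
      rw [this]; push_cast; ring
    linear_combination -hzc
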